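/- Let n ≥ 3 cells with conservation equations x₁⁺ = x₁ − s₂f₁(x₁) + w₁u₁, xᵢ⁺ = xᵢ − s_{i+1}fᵢ(xᵢ) + wᵢuᵢ + sᵢ(1−pᵢ₋₁)fᵢ₋₁(xᵢ₋₁) for i = 2,…,n, with conventions pₙ = 1 and s_{n+1} = 1, and I_j(x) = Σ_{i=1}^j xᵢ. Then Σ_{j=1}^n I_j(x⁺) = Σ_{j=1}^n I_j(x) + Σ_{i=1}^n (n+1−i) wᵢuᵢ − Σ_{i=1}^n (1 + pᵢ(n−i)) s_{i+1} fᵢ(xᵢ). -/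

import Mathlib

open Set Finset

theorem stmt_9 (n : ℕ) (hn : 3 ≤ n)
    (x xplus u s w p : ℕ → ℝ) (f : ℕ → ℝ → ℝ)
    (hx : ∀ i ∈ Finset.Icc 1 n, 0 ≤ x i)
    (hu : ∀ i ∈ Finset.Icc 1 n, 0 ≤ u i)
    (hs : ∀ i ∈ Finset.Icc 2 (n + 1), s i ∈ Icc (0:ℝ) 1)
    (hw : ∀ i ∈ Finset.Icc 1 n, w i ∈ Icc (0:ℝ) 1)
    (hp : ∀ i ∈ Finset.Icc 1 n, p i ∈ Icc (0:ℝ) 1)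
    (hpn : p n = 1) (hsn : s (n + 1) = 1)
    (hdyn1 : xplus 1 = x 1 - s 2 * f 1 (x 1) + w 1 * u 1)
    (hdyni : ∀ i ∈ Finset.Icc 2 n,
      xplus i = x i - s (i + 1) * f i (x i) + w i * u i
        + s i * (1 - p (i - 1)) * f (i - 1) (x (i - 1))) :
    ∑ j ∈ Finset.Icc 1 n, ∑ i ∈ Finset.Icc 1 j, xplus i
      = (∑ j ∈ Finset.Icc 1 n, ∑ i ∈ Finset.Icc 1 j, x i)
        + (∑ i ∈ Finset.Icc 1 n, ((n : ℝ) + 1 - (i : ℝ)) * (w i * u i))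
        - ∑ i ∈ Finset.Icc 1 n, (1 + p i * ((n : ℝ) - (i : ℝ))) * s (i + 1) * f i (x i) := by
  have key : ∀ g : ℕ → ℝ, ∑ j ∈ Finset.Icc 1 n, ∑ i ∈ Finset.Icc 1 j, g i
      = ∑ i ∈ Finset.Icc 1 n, ((n : ℝ) + 1 - (i : ℝ)) * g i := by
    intro g
    rw [Finset.sum_comm' (s := Finset.Icc 1 n) (t := fun j => Finset.Icc 1 j)
      (t' := Finset.Icc 1 n) (s' := fun i => Finset.Icc i n)
      (by intro j i; simp only [Finset.mem_Icc]; omega)]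
    refine Finset.sum_congr rfl fun i hi => ?_
    rw [Finset.sum_const, Nat.card_Icc, nsmul_eq_mul]
    simp only [Finset.mem_Icc] at hi
    congr 1
    push_cast [Nat.cast_sub (by omega : i ≤ n + 1)]
    ring
  set c : ℕ → ℝ := fun i => if 2 ≤ i then s i * (1 - p (i - 1)) * f (i - 1) (x (i - 1)) else 0
    with hc
  have hxp : ∀ i ∈ Finset.Icc 1 n, xplus i
      = x i + w i * u i - s (i + 1) * f i (x i) + c i := by
    intro i hi
    simp only [Finset.mem_Icc] at hi
    rcases eq_or_lt_of_le hi.1 with h1 | h1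
    · simp only [hc, ← h1]
      norm_num
      rw [hdyn1]; ring
    · have hd := hdyni i (Finset.mem_Icc.mpr ⟨h1, hi.2⟩)
      have hci : c i = s i * (1 - p (i - 1)) * f (i - 1) (x (i - 1)) := by
        simp only [hc]
        rw [if_pos (by omega : 2 ≤ i)]
      rw [hd, hci]; ring
  have hshift : ∑ i ∈ Finset.Icc 1 n, ((n : ℝ) + 1 - (i : ℝ)) * c i
      = ∑ i ∈ Finset.Icc 1 n, ((n : ℝ) - (i : ℝ)) * ((1 - p i) * (s (i + 1) * f i (x i))) := by
    have h1 : Finset.Icc 1 n = insert 1 (Finset.Icc 2 n) := by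
      ext j; simp only [Finset.mem_insert, Finset.mem_Icc]; omega
    have h2 : Finset.Icc 1 n = insert n (Finset.Icc 1 (n - 1)) := by
      ext j; simp only [Finset.mem_insert, Finset.mem_Icc]; omega
    have hc1 : c 1 = 0 := by simp [hc]
    have himg : Finset.Icc 2 n = (Finset.Icc 1 (n - 1)).image (· + 1) := by
      rw [Finset.image_add_right_Icc]; congr 1; omega
    calc ∑ i ∈ Finset.Icc 1 n, ((n : ℝ) + 1 - (i : ℝ)) * c i
        = ∑ i ∈ Finset.Icc 2 n, ((n : ℝ) + 1 - (i : ℝ)) * c i := by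
          rw [h1, Finset.sum_insert (by simp), hc1]; ring
      _ = ∑ i ∈ Finset.Icc 1 (n - 1),
            ((n : ℝ) - (i : ℝ)) * ((1 - p i) * (s (i + 1) * f i (x i))) := by
          rw [himg, Finset.sum_image (by intro a _ b _ h; simp only at h; omega)]
          refine Finset.sum_congr rfl fun i hi => ?_
          simp only [Finset.mem_Icc] at hi
          have hci : c (i + 1) = s (i + 1) * (1 - p i) * f i (x i) := by
            simp only [hc]
            rw [if_pos (by omega : 2 ≤ i + 1)]
            simp
          rw [hci]
          push_cast
          ring
      _ = ∑ i ∈ Finset.Icc 1 n,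
            ((n : ℝ) - (i : ℝ)) * ((1 - p i) * (s (i + 1) * f i (x i))) := by
          rw [h2, Finset.sum_insert (by simp only [Finset.mem_Icc]; omega)]
          simp
  rw [key xplus, key x]
  rw [Finset.sum_congr rfl (fun i hi => by rw [hxp i hi])]
  have h4 : ∀ i ∈ Finset.Icc 1 n,
      ((n : ℝ) + 1 - (i : ℝ)) * (x i + w i * u i - s (i + 1) * f i (x i) + c i)
    = (((n : ℝ) + 1 - (i : ℝ)) * x i + ((n : ℝ) + 1 - (i : ℝ)) * (w i * u i)
        - (1 + p i * ((n : ℝ) - (i : ℝ))) * s (i + 1) * f i (x i))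
      + (((n : ℝ) + 1 - (i : ℝ)) * c i
        - ((n : ℝ) - (i : ℝ)) * ((1 - p i) * (s (i + 1) * f i (x i)))) := by
    intro i _; ring
  have hz : ∑ i ∈ Finset.Icc 1 n, (((n : ℝ) + 1 - (i : ℝ)) * c i
      - ((n : ℝ) - (i : ℝ)) * ((1 - p i) * (s (i + 1) * f i (x i)))) = 0 := by
    rw [Finset.sum_sub_distrib, hshift, sub_self]
  rw [Finset.sum_congr rfl h4, Finset.sum_add_distrib, hz, add_zero,
    Finset.sum_sub_distrib, Finset.sum_add_distrib]
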